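/- Let D = {x_1,...,x_n} ⊂ Z^d be finite. Then det G_D = Π_{j=1}^n G_{D∖{x_1,...,x_{j-1}}}(x_j, x_j), and in particular this product is independent of the chosen ordering of the points of D. -/

import Mathlib

def adj {d : ℕ} (x y : Fin d → ℤ) : Prop := (∑ i : Fin d, |x i - y i|) = 1

instance {d : ℕ} (x y : Fin d → ℤ) : Decidable (adj x y) := by unfold adj; infer_instance

noncomputable def killedKernel {d : ℕ} (D : Finset (Fin d → ℤ)) : Matrix D D ℝ :=
  fun x y => if adj (x : Fin d → ℤ) (y : Fin d → ℤ) then 1 / (2 * (d : ℝ)) else 0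

/-- The Green's function `G_D(x,y) = ∑_k (P_D)^k(x,y)` of simple random walk killed upon
exiting the finite set `D`, extended by `0` outside `D`. -/
noncomputable def green {d : ℕ} (D : Finset (Fin d → ℤ)) (x y : Fin d → ℤ) : ℝ :=
  if hx : x ∈ D then (if hy : y ∈ D then
    ∑' k : ℕ, ((killedKernel D) ^ k) ⟨x, hx⟩ ⟨y, hy⟩ else 0) else 0



/-- the finset of potential neighbours -/
def nbrFinset {d : ℕ} (x : Fin d → ℤ) : Finset (Fin d → ℤ) :=
  Finset.image (fun p : Fin d × Bool =>
    Function.update x p.1 (x p.1 + if p.2 then 1 else -1)) Finset.univ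

lemma nbrFinset_card {d : ℕ} (x : Fin d → ℤ) : (nbrFinset x).card ≤ 2 * d := by
  refine le_trans (Finset.card_image_le) ?_
  simp [Finset.card_univ, mul_comm]

lemma mem_nbrFinset_of_adj {d : ℕ} {x y : Fin d → ℤ} (h : adj x y) : y ∈ nbrFinset x := by
  unfold adj at h
  have hne : (∑ i : Fin d, |x i - y i|) ≠ 0 := by rw [h]; norm_num
  obtain ⟨i, -, hi⟩ := Finset.exists_ne_zero_of_sum_ne_zero hne
  have hsplit : |x i - y i| + ∑ j ∈ Finset.univ.erase i, |x j - y j| = 1 := by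
    rw [Finset.add_sum_erase _ (fun j => |x j - y j|) (Finset.mem_univ i)]; exact h
  have hnonneg : ∀ j ∈ Finset.univ.erase i, (0:ℤ) ≤ |x j - y j| := fun j _ => abs_nonneg _
  have h1 : (1:ℤ) ≤ |x i - y i| := by
    rcases lt_or_ge (|x i - y i|) 1 with hlt | hle
    · exfalso; have : |x i - y i| = 0 := le_antisymm (by omega) (abs_nonneg _)
      exact hi this
    · exact hle
  have hrest : ∑ j ∈ Finset.univ.erase i, |x j - y j| = 0 := by
    have := Finset.sum_nonneg hnonneg; omega
  have habs : |x i - y i| = 1 := by omega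
  have hjj : ∀ j, j ≠ i → x j = y j := by
    intro j hj
    have := (Finset.sum_eq_zero_iff_of_nonneg hnonneg).1 hrest j
      (Finset.mem_erase.2 ⟨hj, Finset.mem_univ j⟩)
    have := abs_eq_zero.1 this; omega
  rcases abs_eq (by norm_num : (0:ℤ) ≤ 1) |>.1 habs with hcase | hcase
  · -- x i - y i = 1, so y i = x i - 1
    refine Finset.mem_image.2 ⟨(i, false), Finset.mem_univ _, ?_⟩
    funext j
    by_cases hji : j = i
    · subst hji; simp [Function.update_self]; omega
    · simp [Function.update_of_ne hji]; exact hjj j hji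
  · refine Finset.mem_image.2 ⟨(i, true), Finset.mem_univ _, ?_⟩
    funext j
    by_cases hji : j = i
    · subst hji; simp [Function.update_self]; omega
    · simp [Function.update_of_ne hji]; exact hjj j hji

lemma not_adj_self {d : ℕ} (x : Fin d → ℤ) : ¬ adj x x := by simp [adj]

lemma adj_step {d : ℕ} (hd : 1 ≤ d) (x : Fin d → ℤ) (a : ℤ) :
    adj (fun j => if j = (⟨0, hd⟩ : Fin d) then x j + a else x j)
        (fun j => if j = (⟨0, hd⟩ : Fin d) then x j + (a+1) else x j) := by
  unfold adj
  have : ∀ j : Fin d, |(if j = (⟨0, hd⟩ : Fin d) then x j + a else x j) -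
      (if j = (⟨0, hd⟩ : Fin d) then x j + (a+1) else x j)| = if j = (⟨0, hd⟩ : Fin d) then 1 else 0 := by
    intro j; by_cases h : j = (⟨0, hd⟩ : Fin d) <;> simp [h] <;> omega
  simp only [this]
  simp
variable {d : ℕ} {D : Finset (Fin d → ℤ)}

lemma kernel_nonneg (x y : D) : 0 ≤ killedKernel D x y := by
  unfold killedKernel
  split
  · positivity
  · exact le_refl 0

lemma kernel_pow_nonneg (k : ℕ) (x y : D) : 0 ≤ (killedKernel D ^ k) x y := by
  induction k generalizing x y with
  | zero => rw [pow_zero, Matrix.one_apply]; split <;> norm_num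
  | succ k ih =>
    rw [pow_succ, Matrix.mul_apply]
    exact Finset.sum_nonneg fun z _ => mul_nonneg (ih x z) (kernel_nonneg z y)

lemma rowsum_eq (x : D) :
    ∑ y : D, killedKernel D x y
      = ((Finset.univ.filter fun y : D => adj (x : Fin d → ℤ) (y : Fin d → ℤ)).card : ℝ)
        * (1 / (2 * (d:ℝ))) := by
  unfold killedKernel
  rw [Finset.sum_ite, Finset.sum_const, Finset.sum_const_zero, add_zero, nsmul_eq_mul]

lemma filter_card_le (x : D) :
    (Finset.univ.filter fun y : D => adj (x : Fin d → ℤ) (y : Fin d → ℤ)).card ≤ 2 * d := by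
  refine le_trans (Finset.card_le_card_of_injOn (fun y => (y : Fin d → ℤ)) ?_ ?_)
    (nbrFinset_card (x : Fin d → ℤ))
  · intro y hy; exact mem_nbrFinset_of_adj (Finset.mem_filter.1 hy).2
  · intro a _ b _ h; exact Subtype.ext h

lemma rowsum_le_one (hd : 1 ≤ d) (x : D) : ∑ y : D, killedKernel D x y ≤ 1 := by
  rw [rowsum_eq]
  have h2d : (0:ℝ) < 2 * d := by
    have : (1:ℝ) ≤ (d:ℝ) := by exact_mod_cast hd
    linarith
  calc ((Finset.univ.filter fun y : D => adj (x : Fin d → ℤ) (y : Fin d → ℤ)).card : ℝ)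
        * (1 / (2 * (d:ℝ))) ≤ (2 * (d:ℝ)) * (1 / (2 * (d:ℝ))) := by
        have := filter_card_le (D := D) x
        gcongr
        exact_mod_cast this
    _ = 1 := by field_simp

lemma rowsum_le_of_exit (hd : 1 ≤ d) (x : D) {z : Fin d → ℤ} (hz : z ∉ D)
    (hadj : adj (x : Fin d → ℤ) z) :
    ∑ y : D, killedKernel D x y ≤ 1 - 1 / (2 * (d:ℝ)) := by
  have h2d : (0:ℝ) < 2 * d := by
    have : (1:ℝ) ≤ (d:ℝ) := by exact_mod_cast hd
    linarith
  have hcard : (Finset.univ.filter fun y : D => adj (x : Fin d → ℤ) (y : Fin d → ℤ)).card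
      ≤ 2 * d - 1 := by
    have hmem : z ∈ nbrFinset (x : Fin d → ℤ) := mem_nbrFinset_of_adj hadj
    have h1 : (Finset.univ.filter fun y : D => adj (x : Fin d → ℤ) (y : Fin d → ℤ)).card
        ≤ ((nbrFinset (x : Fin d → ℤ)).erase z).card := by
      refine Finset.card_le_card_of_injOn (fun y => (y : Fin d → ℤ)) ?_ ?_
      · intro y hy
        refine Finset.mem_erase.2 ⟨?_, mem_nbrFinset_of_adj (Finset.mem_filter.1 hy).2⟩
        intro hyz; exact hz (hyz ▸ y.2)
      · intro a _ b _ h; exact Subtype.ext h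
    rw [Finset.card_erase_of_mem hmem] at h1
    have := nbrFinset_card (x : Fin d → ℤ)
    omega
  rw [rowsum_eq]
  have hc : ((Finset.univ.filter fun y : D => adj (x : Fin d → ℤ) (y : Fin d → ℤ)).card : ℝ)
      ≤ 2 * (d:ℝ) - 1 := by
    have h2 : ((2 * d - 1 : ℕ) : ℝ) = 2 * (d:ℝ) - 1 := by
      have : 1 ≤ 2 * d := by omega
      push_cast [this]; ring
    calc ((Finset.univ.filter fun y : D => adj (x : Fin d → ℤ) (y : Fin d → ℤ)).card : ℝ)
        ≤ ((2 * d - 1 : ℕ) : ℝ) := by exact_mod_cast hcard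
      _ = 2 * (d:ℝ) - 1 := h2
  calc ((Finset.univ.filter fun y : D => adj (x : Fin d → ℤ) (y : Fin d → ℤ)).card : ℝ)
        * (1 / (2 * (d:ℝ))) ≤ (2 * (d:ℝ) - 1) * (1 / (2 * (d:ℝ))) := by
        apply mul_le_mul_of_nonneg_right hc; positivity
    _ = 1 - 1 / (2 * (d:ℝ)) := by field_simp

noncomputable def usum (D : Finset (Fin d → ℤ)) (k : ℕ) (x : D) : ℝ :=
  ∑ y : D, (killedKernel D ^ k) x y

lemma usum_nonneg (k : ℕ) (x : D) : 0 ≤ usum D k x :=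
  Finset.sum_nonneg fun y _ => kernel_pow_nonneg k x y

lemma usum_zero (x : D) : usum D 0 x = 1 := by
  simp [usum, Matrix.one_apply]

lemma usum_add (a b : ℕ) (x : D) :
    usum D (a + b) x = ∑ z : D, (killedKernel D ^ a) x z * usum D b z := by
  unfold usum
  rw [pow_add]
  simp only [Matrix.mul_apply]
  rw [Finset.sum_comm]
  simp [Finset.mul_sum]

lemma usum_succ (k : ℕ) (x : D) :
    usum D (k + 1) x = ∑ z : D, killedKernel D x z * usum D k z := by
  have := usum_add (D := D) 1 k x
  simpa [pow_one, add_comm] using this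

lemma usum_le_one (hd : 1 ≤ d) (k : ℕ) (x : D) : usum D k x ≤ 1 := by
  induction k generalizing x with
  | zero => rw [usum_zero]
  | succ k ih =>
    rw [usum_succ]
    calc ∑ z : D, killedKernel D x z * usum D k z
        ≤ ∑ z : D, killedKernel D x z * 1 := by
          refine Finset.sum_le_sum fun z _ => ?_
          exact mul_le_mul_of_nonneg_left (ih z) (kernel_nonneg x z)
      _ ≤ 1 := by simpa using rowsum_le_one hd x

lemma usum_anti (hd : 1 ≤ d) : ∀ {k l : ℕ}, k ≤ l → ∀ x : D, usum D l x ≤ usum D k x := by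
  have : ∀ k (x : D), usum D (k + 1) x ≤ usum D k x := by
    intro k x
    rw [usum_add k 1 x]
    calc ∑ z : D, (killedKernel D ^ k) x z * usum D 1 z
        ≤ ∑ z : D, (killedKernel D ^ k) x z * 1 := by
          refine Finset.sum_le_sum fun z _ => ?_
          exact mul_le_mul_of_nonneg_left (usum_le_one hd 1 z) (kernel_pow_nonneg k x z)
      _ = usum D k x := by simp [usum]
  intro k l hkl x
  exact antitone_nat_of_succ_le (f := fun k => usum D k x) (fun n => this n x) hkl

lemma usum_lt_one_of_path (hd : 1 ≤ d) :
    ∀ (t : ℕ) (c : ℕ → (Fin d → ℤ)), (∀ i < t, adj (c i) (c (i+1))) → (∀ i < t, c i ∈ D) →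
      c t ∉ D → ∀ h0 : c 0 ∈ D, usum D t ⟨c 0, h0⟩ < 1 := by
  intro t
  induction t with
  | zero => intro c _ _ hout h0; exact absurd h0 hout
  | succ t ih =>
    intro c hadj hmem hout h0
    have h2d : (0:ℝ) < 2 * d := by
      have : (1:ℝ) ≤ (d:ℝ) := by exact_mod_cast hd
      linarith
    by_cases h1 : c 1 ∈ D
    · have hlt : usum D t ⟨c 1, h1⟩ < 1 :=
        ih (fun i => c (i+1)) (fun i hi => hadj (i+1) (by omega))
          (fun i hi => hmem (i+1) (by omega)) hout h1
      rw [usum_succ]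
      set x : D := ⟨c 0, h0⟩ with hx
      set y1 : D := ⟨c 1, h1⟩ with hy1
      have hsplit := Finset.add_sum_erase Finset.univ
        (fun z : D => killedKernel D x z * usum D t z) (Finset.mem_univ y1)
      have hsplit2 := Finset.add_sum_erase Finset.univ
        (fun z : D => killedKernel D x z) (Finset.mem_univ y1)
      have hpos : 0 < killedKernel D x y1 := by
        unfold killedKernel
        rw [if_pos (hadj 0 (by omega))]
        positivity
      have h2 : killedKernel D x y1 * usum D t y1 < killedKernel D x y1 := by
        calc killedKernel D x y1 * usum D t y1 < killedKernel D x y1 * 1 :=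
              mul_lt_mul_of_pos_left hlt hpos
          _ = killedKernel D x y1 := mul_one _
      have h3 : ∑ z ∈ Finset.univ.erase y1, killedKernel D x z * usum D t z
          ≤ ∑ z ∈ Finset.univ.erase y1, killedKernel D x z := by
        refine Finset.sum_le_sum fun z _ => ?_
        calc killedKernel D x z * usum D t z ≤ killedKernel D x z * 1 :=
              mul_le_mul_of_nonneg_left (usum_le_one hd t z) (kernel_nonneg x z)
          _ = killedKernel D x z := mul_one _
      have h4 : ∑ z : D, killedKernel D x z ≤ 1 := rowsum_le_one hd x
      calc ∑ z : D, killedKernel D x z * usum D t z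
          = killedKernel D x y1 * usum D t y1
            + ∑ z ∈ Finset.univ.erase y1, killedKernel D x z * usum D t z := hsplit.symm
        _ < killedKernel D x y1 + ∑ z ∈ Finset.univ.erase y1, killedKernel D x z := by
            linarith
        _ = ∑ z : D, killedKernel D x z := hsplit2
        _ ≤ 1 := h4
    · rw [usum_succ]
      set x : D := ⟨c 0, h0⟩ with hx
      have hb : ∑ z : D, killedKernel D x z * usum D t z ≤ ∑ z : D, killedKernel D x z := by
        refine Finset.sum_le_sum fun z _ => ?_
        calc killedKernel D x z * usum D t z ≤ killedKernel D x z * 1 :=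
              mul_le_mul_of_nonneg_left (usum_le_one hd t z) (kernel_nonneg x z)
          _ = killedKernel D x z := mul_one _
      have hc := rowsum_le_of_exit hd x h1 (hadj 0 (by omega))
      have hfrac : (0:ℝ) < 1 / (2 * (d:ℝ)) := by positivity
      linarith

lemma exists_usum_lt_one (hd : 1 ≤ d) (x : D) : ∃ t, usum D t x < 1 := by
  classical
  set i0 : Fin d := ⟨0, hd⟩ with hi0
  set c : ℕ → (Fin d → ℤ) :=
    fun i => fun j => if j = i0 then (x : Fin d → ℤ) j + (i:ℤ) else (x : Fin d → ℤ) j with hc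
  have hc0 : c 0 = (x : Fin d → ℤ) := by
    funext j; by_cases h : j = i0 <;> simp [hc, h]
  have hcinj : Function.Injective c := by
    intro a b hab
    have := congrFun hab i0
    simp [hc] at this
    exact_mod_cast this
  have hexist : ∃ t, c t ∉ D := by
    by_contra hall
    push_neg at hall
    have hinj2 : Function.Injective (fun t => (⟨c t, hall t⟩ : D)) := by
      intro a b h
      exact hcinj (congrArg Subtype.val h)
    obtain ⟨a, b, hne, heq⟩ := Finite.exists_ne_map_eq_of_infinite (fun t => (⟨c t, hall t⟩ : D))
    exact hne (hinj2 heq)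
  set t0 := Nat.find hexist with ht0
  have hadjc : ∀ i, adj (c i) (c (i+1)) := by
    intro i
    have step := adj_step hd (x : Fin d → ℤ) (i : ℤ)
    have e1 : c i = fun j => if j = i0 then (x : Fin d → ℤ) j + (i:ℤ) else (x : Fin d → ℤ) j := rfl
    have e2 : c (i+1) = fun j => if j = i0 then (x : Fin d → ℤ) j + ((i:ℤ)+1) else (x : Fin d → ℤ) j := by
      funext j; by_cases h : j = i0 <;> simp [hc, h] <;> push_cast <;> ring
    rw [e1, e2]
    exact step
  have hres : usum D t0 ⟨c 0, hc0 ▸ x.2⟩ < 1 := by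
    refine usum_lt_one_of_path hd t0 c (fun i _ => hadjc i) (fun i hi => ?_) (Nat.find_spec hexist) _
    by_contra hnot
    exact absurd (Nat.find_le hnot) (not_le_of_gt hi)
  refine ⟨t0, ?_⟩
  have hxeq : (⟨c 0, hc0 ▸ x.2⟩ : D) = x := Subtype.ext hc0
  rwa [hxeq] at hres

lemma exists_m_c (hd : 1 ≤ d) (D : Finset (Fin d → ℤ)) :
    ∃ m : ℕ, 0 < m ∧ ∃ c' : ℝ, 0 ≤ c' ∧ c' < 1 ∧ ∀ x : D, usum D m x ≤ c' := by
  classical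
  cases isEmpty_or_nonempty D with
  | inl h => exact ⟨1, one_pos, 1/2, by norm_num, by norm_num, fun x => isEmptyElim x⟩
  | inr h =>
    choose T hT using fun x : D => exists_usum_lt_one hd x
    set m : ℕ := max 1 (Finset.univ.sup T) with hm
    have hm0 : 0 < m := lt_of_lt_of_le one_pos (le_max_left _ _)
    have hboundall : ∀ x : D, usum D m x < 1 := by
      intro x
      have hTm : T x ≤ m := le_trans (Finset.le_sup (Finset.mem_univ x)) (le_max_right _ _)
      exact lt_of_le_of_lt (usum_anti hd hTm x) (hT x)
    have hne : (Finset.univ : Finset D).Nonempty := Finset.univ_nonempty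
    set c' : ℝ := Finset.univ.sup' hne (fun x : D => usum D m x) with hc'
    refine ⟨m, hm0, c', ?_, ?_, ?_⟩
    · obtain ⟨x0, _⟩ := hne
      exact le_trans (usum_nonneg m x0) (Finset.le_sup' _ (Finset.mem_univ x0))
    · exact (Finset.sup'_lt_iff hne).2 fun x _ => hboundall x
    · intro x; exact Finset.le_sup' _ (Finset.mem_univ x)

lemma usum_decay {m : ℕ} {c' : ℝ} (hc0 : 0 ≤ c') (hc : ∀ x : D, usum D m x ≤ c') :
    ∀ (q : ℕ) (x : D), usum D (q * m) x ≤ c' ^ q := by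
  intro q
  induction q with
  | zero => intro x; simpa using (usum_zero x).le
  | succ q ih =>
    intro x
    have : (q + 1) * m = q * m + m := by ring
    rw [this, usum_add]
    calc ∑ z : D, (killedKernel D ^ (q * m)) x z * usum D m z
        ≤ ∑ z : D, (killedKernel D ^ (q * m)) x z * c' := by
          refine Finset.sum_le_sum fun z _ => ?_
          exact mul_le_mul_of_nonneg_left (hc z) (kernel_pow_nonneg _ x z)
      _ = usum D (q * m) x * c' := by rw [← Finset.sum_mul]; rfl
      _ ≤ c' ^ q * c' := mul_le_mul_of_nonneg_right (ih x) hc0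
      _ = c' ^ (q + 1) := by ring

lemma summable_aux {c' : ℝ} (h0 : 0 < c') (h1 : c' < 1) {m : ℕ} (hm : 0 < m) :
    Summable (fun k : ℕ => c' ^ (k / m)) := by
  set r : ℝ := c' ^ ((1:ℝ)/m) with hr
  have hm' : (0:ℝ) < m := by exact_mod_cast hm
  have hr0 : 0 ≤ r := Real.rpow_nonneg h0.le _
  have hr1 : r < 1 := Real.rpow_lt_one h0.le h1 (by positivity)
  refine Summable.of_nonneg_of_le (fun k => by positivity) (fun k => ?_)
    ((summable_geometric_of_lt_one hr0 hr1).mul_left c'⁻¹)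
  have hk : ((k:ℝ)/m - 1) ≤ ((k / m : ℕ) : ℝ) := by
    have h2 : k < m * (k / m + 1) := Nat.lt_mul_div_succ k hm
    have h3 : (k:ℝ) < m * (((k/m : ℕ):ℝ) + 1) := by exact_mod_cast h2
    rw [sub_le_iff_le_add, div_le_iff₀ hm']
    nlinarith
  calc c' ^ (k/m : ℕ) = c' ^ (((k/m : ℕ):ℝ)) := (Real.rpow_natCast _ _).symm
    _ ≤ c' ^ ((k:ℝ)/m - 1) := Real.rpow_le_rpow_of_exponent_ge h0 h1.le hk
    _ = c'⁻¹ * c' ^ ((k:ℝ)/m) := by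
        rw [Real.rpow_sub h0, Real.rpow_one]; ring
    _ = c'⁻¹ * r ^ k := by
        rw [show (k:ℝ)/m = (1/m) * k by ring, Real.rpow_mul h0.le, Real.rpow_natCast]

lemma summable_entry (hd : 1 ≤ d) (x y : D) :
    Summable fun k => (killedKernel D ^ k) x y := by
  obtain ⟨m, hm, c', hc0, hc1, hc⟩ := exists_m_c hd D
  set c'' : ℝ := max c' (1/2) with hc''
  have h0 : (0:ℝ) < c'' := lt_of_lt_of_le (by norm_num) (le_max_right _ _)
  have h1 : c'' < 1 := max_lt hc1 (by norm_num)
  refine Summable.of_nonneg_of_le (fun k => kernel_pow_nonneg k x y) (fun k => ?_)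
    (summable_aux h0 h1 hm)
  calc (killedKernel D ^ k) x y ≤ usum D k x :=
        Finset.single_le_sum (fun z _ => kernel_pow_nonneg k x z) (Finset.mem_univ y)
    _ ≤ usum D ((k / m) * m) x := usum_anti hd (Nat.div_mul_le_self k m) x
    _ ≤ c' ^ (k / m) := usum_decay hc0 hc (k/m) x
    _ ≤ c'' ^ (k / m) := pow_le_pow_left₀ hc0 (le_max_left _ _) _

noncomputable def greenMatrix (D : Finset (Fin d → ℤ)) : Matrix D D ℝ :=
  ∑' k : ℕ, killedKernel D ^ k

lemma summable_matrix (hd : 1 ≤ d) : Summable (fun k : ℕ => killedKernel D ^ k) := by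
  have : Summable (fun k : ℕ => ((killedKernel D ^ k : Matrix D D ℝ) : D → D → ℝ)) :=
    Pi.summable.2 fun x => Pi.summable.2 fun y => summable_entry hd x y
  exact this

lemma greenMatrix_apply (hd : 1 ≤ d) (x y : D) :
    greenMatrix D x y = ∑' k : ℕ, (killedKernel D ^ k) x y := by
  unfold greenMatrix
  exact ((Pi.hasSum.1 (Pi.hasSum.1 (summable_matrix hd).hasSum x) y).tsum_eq).symm

lemma greenMatrix_eq_one_add (hd : 1 ≤ d) :
    greenMatrix D = 1 + killedKernel D * greenMatrix D := by
  apply Matrix.ext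
  intro x y
  rw [greenMatrix_apply hd, Summable.tsum_eq_zero_add (summable_entry hd x y)]
  have h1 : ∀ k : ℕ, (killedKernel D ^ (k+1)) x y
      = ∑ z : D, killedKernel D x z * (killedKernel D ^ k) z y := by
    intro k; rw [pow_succ', Matrix.mul_apply]
  simp only [h1]
  have h2 : ∑' k : ℕ, ∑ z : D, killedKernel D x z * (killedKernel D ^ k) z y
      = ∑ z : D, ∑' k : ℕ, killedKernel D x z * (killedKernel D ^ k) z y :=
    Summable.tsum_finsetSum (fun z _ => (summable_entry hd z y).mul_left _)
  rw [h2]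
  have h3 : ∀ z : D, ∑' k : ℕ, killedKernel D x z * (killedKernel D ^ k) z y
      = killedKernel D x z * greenMatrix D z y := by
    intro z
    rw [Summable.tsum_mul_left _ (summable_entry hd z y), greenMatrix_apply hd]
  simp only [h3]
  rw [Matrix.add_apply, Matrix.mul_apply, pow_zero]

lemma green_right_inv (hd : 1 ≤ d) : (1 - killedKernel D) * greenMatrix D = 1 := by
  have h := greenMatrix_eq_one_add (D := D) hd
  rw [sub_mul, one_mul]
  nth_rewrite 1 [h]
  rw [add_sub_cancel_right]

lemma green_left_inv (hd : 1 ≤ d) : greenMatrix D * (1 - killedKernel D) = 1 :=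
  mul_eq_one_comm.1 (green_right_inv hd)

lemma isUnit_det_one_sub (hd : 1 ≤ d) : IsUnit (1 - killedKernel D).det :=
  Matrix.isUnit_det_of_right_inverse (green_right_inv hd)

lemma inv_one_sub_eq (hd : 1 ≤ d) : (1 - killedKernel D)⁻¹ = greenMatrix D :=
  Matrix.inv_eq_right_inv (green_right_inv hd)

lemma greenMatrix_diag_pos (hd : 1 ≤ d) (x : D) : 0 < greenMatrix D x x := by
  rw [greenMatrix_apply hd]
  have h0 : ((killedKernel D ^ 0) x x) ≤ ∑' k : ℕ, (killedKernel D ^ k) x x :=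
    Summable.le_tsum (summable_entry hd x x) 0 (fun j _ => kernel_pow_nonneg j x x)
  rw [pow_zero, Matrix.one_apply_eq] at h0
  linarith

lemma det_greenMatrix_eq (hd : 1 ≤ d) :
    (greenMatrix D).det = ((1 - killedKernel D).det)⁻¹ := by
  rw [← inv_one_sub_eq hd, Matrix.det_nonsing_inv, Ring.inverse_eq_inv']

def peelEquiv (D : Finset (Fin d → ℤ)) (e : Fin d → ℤ) (he : e ∈ D) :
    Unit ⊕ {y // y ∈ D.erase e} ≃ {y // y ∈ D} where
  toFun := Sum.elim (fun _ => ⟨e, he⟩) (fun y => ⟨y, Finset.mem_of_mem_erase y.2⟩)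
  invFun x := if h : (x : Fin d → ℤ) = e then Sum.inl ()
    else Sum.inr ⟨x, Finset.mem_erase.2 ⟨h, x.2⟩⟩
  left_inv := by
    rintro (⟨⟩ | y)
    · simp
    · have hy : (y : Fin d → ℤ) ≠ e := (Finset.mem_erase.1 y.2).1
      simp [hy]
  right_inv := by
    intro x
    by_cases h : (x : Fin d → ℤ) = e
    · dsimp only
      rw [dif_pos h]
      exact Subtype.ext h.symm
    · simp [h]

lemma adjugate_diag (hd : 1 ≤ d) {e : Fin d → ℤ} (he : e ∈ D) :
    (1 - killedKernel D).adjugate ⟨e, he⟩ ⟨e, he⟩ = (1 - killedKernel (D.erase e)).det := by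
  rw [Matrix.adjugate_apply]
  set σ := peelEquiv D e he with hσ
  rw [← Matrix.det_submatrix_equiv_self σ]
  have hblock : ((1 - killedKernel D).updateRow ⟨e, he⟩ (Pi.single ⟨e, he⟩ 1)).submatrix σ σ
      = Matrix.fromBlocks 1 0
        (Matrix.of fun (y : {y // y ∈ D.erase e}) (_ : Unit) =>
          (1 - killedKernel D) (σ (Sum.inr y)) ⟨e, he⟩)
        (1 - killedKernel (D.erase e)) := by
    ext i j
    match i, j with
    | Sum.inl _, Sum.inl _ =>
      simp [Matrix.submatrix_apply, hσ, peelEquiv, Matrix.updateRow_self]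
    | Sum.inl _, Sum.inr z =>
      have hz : σ (Sum.inr z) ≠ (⟨e, he⟩ : {y // y ∈ D}) := by
        intro h
        exact (Finset.mem_erase.1 z.2).1 (congrArg Subtype.val h)
      simp only [Matrix.submatrix_apply, hσ, peelEquiv, Equiv.coe_fn_mk, Sum.elim_inl,
        Matrix.updateRow_self, Matrix.fromBlocks_apply₁₂, Matrix.zero_apply]
      exact Pi.single_eq_of_ne (by
        intro h
        exact (Finset.mem_erase.1 z.2).1 (congrArg Subtype.val h)) 1
    | Sum.inr y, Sum.inl _ =>
      have hy : σ (Sum.inr y) ≠ (⟨e, he⟩ : {y // y ∈ D}) := by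
        intro h
        exact (Finset.mem_erase.1 y.2).1 (congrArg Subtype.val h)
      simp only [Matrix.submatrix_apply, Matrix.fromBlocks_apply₂₁, Matrix.of_apply]
      rw [Matrix.updateRow_ne hy]
      rfl
    | Sum.inr y, Sum.inr z =>
      have hy : σ (Sum.inr y) ≠ (⟨e, he⟩ : {y // y ∈ D}) := by
        intro h
        exact (Finset.mem_erase.1 y.2).1 (congrArg Subtype.val h)
      simp only [Matrix.submatrix_apply, Matrix.fromBlocks_apply₂₂]
      rw [Matrix.updateRow_ne hy]
      rw [Matrix.sub_apply, Matrix.sub_apply]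
      congr 1
      · rw [Matrix.one_apply, Matrix.one_apply]
        by_cases h : y = z
        · subst h; simp [hσ, peelEquiv]
        · rw [if_neg, if_neg h]
          intro hc
          exact h (Sum.inr_injective ((peelEquiv D e he).injective hc))
  rw [hblock, Matrix.det_fromBlocks_zero₁₂, Matrix.det_one, one_mul]

lemma det_peel (hd : 1 ≤ d) {e : Fin d → ℤ} (he : e ∈ D) :
    (greenMatrix D).det
      = greenMatrix D ⟨e, he⟩ ⟨e, he⟩ * (greenMatrix (D.erase e)).det := by
  have hDdet : ((1 - killedKernel D).det) ≠ 0 := (isUnit_det_one_sub hd).ne_zero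
  have hD'det : ((1 - killedKernel (D.erase e)).det) ≠ 0 := (isUnit_det_one_sub hd).ne_zero
  have hGee : greenMatrix D ⟨e, he⟩ ⟨e, he⟩
      = ((1 - killedKernel D).det)⁻¹ * (1 - killedKernel (D.erase e)).det := by
    rw [← inv_one_sub_eq hd, Matrix.inv_def, Matrix.smul_apply, adjugate_diag hd he,
      Ring.inverse_eq_inv', smul_eq_mul]
  rw [det_greenMatrix_eq hd, det_greenMatrix_eq hd, hGee, mul_assoc,
    mul_inv_cancel₀ hD'det, mul_one]


lemma green_eq {d : ℕ} {D : Finset (Fin d → ℤ)} (hd : 1 ≤ d) {x y : Fin d → ℤ}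
    (hx : x ∈ D) (hy : y ∈ D) : green D x y = greenMatrix D ⟨x, hx⟩ ⟨y, hy⟩ := by
  rw [green, dif_pos hx, dif_pos hy, greenMatrix_apply hd]

lemma green_of_matrix {d : ℕ} {D : Finset (Fin d → ℤ)} (hd : 1 ≤ d) :
    (Matrix.of fun i j : D => green D (i : Fin d → ℤ) (j : Fin d → ℤ)) = greenMatrix D := by
  apply Matrix.ext
  intro i j
  rw [Matrix.of_apply, green_eq hd i.2 j.2]

lemma det_green_peel {d : ℕ} {D : Finset (Fin d → ℤ)} (hd : 1 ≤ d) {e : Fin d → ℤ}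
    (he : e ∈ D) :
    (Matrix.of fun i j : D => green D (i : Fin d → ℤ) (j : Fin d → ℤ)).det
      = green D e e *
        (Matrix.of fun i j : (D.erase e) =>
          green (D.erase e) (i : Fin d → ℤ) (j : Fin d → ℤ)).det := by
  rw [green_of_matrix hd, green_of_matrix hd, green_eq hd he he, det_peel hd he]

/-- if `D = {x_1, …, x_n} ⊂ ℤ^d` (the `x_j` distinct), then
`det G_D = ∏_{j=1}^n G_{D∖{x_1,…,x_{j-1}}}(x_j, x_j)`.  (Since the left-hand side does
not depend on the ordering of the points, neither does the right-hand side.) -/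
theorem det_green_product (d : ℕ) (hd : 1 ≤ d) (n : ℕ)
    (x : Fin n → (Fin d → ℤ)) (hinj : Function.Injective x)
    (D : Finset (Fin d → ℤ)) (hD : D = Finset.image x Finset.univ) :
    (Matrix.of fun i j : D => green D (i : Fin d → ℤ) (j : Fin d → ℤ)).det =
      ∏ j : Fin n,
        green (D \ Finset.image x (Finset.univ.filter fun m => m < j)) (x j) (x j) := by
  induction n generalizing D with
  | zero =>
    have hempty : D = ∅ := by simp [hD]
    haveI : IsEmpty {y // y ∈ D} := by rw [hempty]; infer_instance
    rw [Matrix.det_isEmpty]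
    simp
  | succ n ih =>
    have he : x 0 ∈ D := hD ▸ Finset.mem_image_of_mem x (Finset.mem_univ 0)
    set e : Fin d → ℤ := x 0 with hedef
    set x' : Fin n → (Fin d → ℤ) := x ∘ Fin.succ with hx'
    have hinj' : Function.Injective x' := hinj.comp (Fin.succ_injective n)
    have hD' : D.erase e = Finset.image x' Finset.univ := by
      ext a
      simp only [Finset.mem_erase, hD, Finset.mem_image, Finset.mem_univ, true_and, hx',
        Function.comp]
      constructor
      · rintro ⟨hne, m, rfl⟩
        rcases Fin.eq_zero_or_eq_succ m with h0 | ⟨m', rfl⟩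
        · subst h0; exact absurd hedef.symm hne
        · exact ⟨m', rfl⟩
      · rintro ⟨m', rfl⟩
        refine ⟨?_, Fin.succ m', rfl⟩
        intro hcontra
        exact (Fin.succ_ne_zero m') (hinj hcontra)
    rw [det_green_peel hd he]
    rw [ih x' hinj' (D.erase e) hD']
    rw [Fin.prod_univ_succ]
    congr 1
    · have h0 : (Finset.univ.filter fun m : Fin (n+1) => m < 0) = ∅ := by
        ext m; simp
      rw [h0]
      simp [hedef]
    · apply Finset.prod_congr rfl
      intro j _
      have hset : D \ Finset.image x (Finset.univ.filter fun m => m < Fin.succ j)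
          = (D.erase e) \ Finset.image x' (Finset.univ.filter fun m => m < j) := by
        ext a
        simp only [Finset.mem_sdiff, Finset.mem_erase, Finset.mem_image, Finset.mem_filter,
          Finset.mem_univ, true_and, hx', Function.comp]
        constructor
        · rintro ⟨haD, hnot⟩
          refine ⟨⟨?_, haD⟩, ?_⟩
          · intro hae
            exact hnot ⟨0, Fin.succ_pos j, hae.symm⟩
          · rintro ⟨m', hm', rfl⟩
            exact hnot ⟨m'.succ, Fin.succ_lt_succ_iff.2 hm', rfl⟩
        · rintro ⟨⟨hne, haD⟩, hnot⟩
          refine ⟨haD, ?_⟩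
          rintro ⟨m, hm, rfl⟩
          rcases Fin.eq_zero_or_eq_succ m with rfl | ⟨m', rfl⟩
          · exact hne rfl
          · exact hnot ⟨m', Fin.succ_lt_succ_iff.1 hm, rfl⟩
      rw [hset]
      rfl
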